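/- Let k be a field of characteristic zero, q ∈ k a primitive e-th root of unity, and f ∈ k[h] with f(0) ≠ 0. Let π : k[h] → k[h]/(f) be the canonical projection and S = k[h^e]. Then for every l ≥ 0, the dimension over k of the image π(h^l·S) equals deg(N(f))/e, where N(f) = lcm(f, σ(f), ..., σ^{e−1}(f)) and σ(h) = qh. -/

import Mathlib

open Polynomial


lemma coeff_comp_C_mul_X {k : Type*} [CommSemiring k] (p : k[X]) (a : k) (n : ℕ) :
    (p.comp (C a * X)).coeff n = a ^ n * p.coeff n := by
  induction p using Polynomial.induction_on' with
  | add p q hp hq => simp [add_comp, hp, hq, mul_add]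
  | monomial m c =>
    rw [monomial_comp, mul_pow, ← C_pow, ← mul_assoc, ← C_mul, C_mul_X_pow_eq_monomial,
      coeff_monomial, coeff_monomial]
    split_ifs with h
    · subst h; ring
    · simp

lemma dvd_comp_of_dvd {k : Type*} [CommSemiring k] {p t : k[X]} (h : p ∣ t) (g : k[X]) :
    p.comp g ∣ t.comp g := by
  obtain ⟨u, rfl⟩ := h
  exact ⟨u.comp g, by rw [mul_comp]⟩

lemma expand_comp_C_mul_X {k : Type*} [CommSemiring k] {a : k} {e : ℕ} (ha : a ^ e = 1)
    (s : k[X]) : (expand k e s).comp (C a * X) = expand k e s := by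
  rw [expand_eq_comp_X_pow, comp_assoc, X_pow_comp, mul_pow, ← C_pow, ha, C_1, one_mul,
    ← expand_eq_comp_X_pow]

section Main

variable {k : Type*} [Field k] {q : k} {e : ℕ} (he : 0 < e) (hq : IsPrimitiveRoot q e)
  {f : k[X]} (hf : f.eval 0 ≠ 0) {Nf : k[X]} (hNmonic : Nf.Monic)
  (hNdvd : ∀ i < e, f.comp (C (q ^ i) * X) ∣ Nf)
  (hNmin : ∀ m : k[X], (∀ i < e, f.comp (C (q ^ i) * X) ∣ m) → Nf ∣ m)

include he hq hf hNmonic hNdvd hNmin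

-- key step a: divisibility conditions are stable under σ
lemma sigma_dvd (m : k[X]) (hm : ∀ i < e, f.comp (C (q ^ i) * X) ∣ m) :
    ∀ i < e, f.comp (C (q ^ i) * X) ∣ m.comp (C q * X) := by
  intro i hi
  rcases Nat.eq_zero_or_pos i with rfl | hi0
  · have := dvd_comp_of_dvd (hm (e - 1) (by omega)) (C q * X)
    rw [comp_assoc, mul_comp, C_comp, X_comp, ← mul_assoc, ← C_mul, ← pow_succ,
      Nat.sub_add_cancel he, hq.pow_eq_one] at this
    rw [pow_zero]
    exact this
  · have := dvd_comp_of_dvd (hm (i - 1) (by omega)) (C q * X)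
    rwa [comp_assoc, mul_comp, C_comp, X_comp, ← mul_assoc, ← C_mul, ← pow_succ,
      Nat.sub_add_cancel hi0] at this

lemma Nf_comp_eq : Nf.comp (C q * X) = Nf * C (q ^ Nf.natDegree) := by
  have hq0 : q ≠ 0 := hq.ne_zero he.ne'
  have hdvd : Nf ∣ Nf.comp (C q * X) :=
    hNmin _ (sigma_dvd he hq hf hNmonic hNdvd hNmin Nf hNdvd)
  have hN0 : Nf ≠ 0 := hNmonic.ne_zero
  have hcomp0 : Nf.comp (C q * X) ≠ 0 := by
    intro h
    have := coeff_comp_C_mul_X Nf q Nf.natDegree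
    rw [h, coeff_zero, hNmonic.coeff_natDegree, mul_one] at this
    exact pow_ne_zero _ hq0 this.symm
  obtain ⟨u, hu⟩ := hdvd
  have hdeg : (Nf.comp (C q * X)).natDegree = Nf.natDegree := by
    rw [natDegree_comp, natDegree_C_mul_X q hq0, mul_one]
  have hu0 : u ≠ 0 := by rintro rfl; rw [mul_zero] at hu; exact hcomp0 hu
  have : u.natDegree = 0 := by
    have := hdeg
    rw [hu, natDegree_mul hN0 hu0] at this
    omega
  obtain ⟨c, rfl⟩ : ∃ c, u = C c := ⟨u.coeff 0, eq_C_of_natDegree_eq_zero this⟩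
  have hc : c = q ^ Nf.natDegree := by
    have h1 := coeff_comp_C_mul_X Nf q Nf.natDegree
    rw [hu, coeff_mul_C, hNmonic.coeff_natDegree, mul_one, one_mul] at h1
    exact h1
  rw [hu, hc]

lemma Nf_coeff_zero_ne : Nf.coeff 0 ≠ 0 := by
  have hdvd : Nf ∣ ∏ i ∈ Finset.range e, f.comp (C (q ^ i) * X) :=
    hNmin _ fun i hi => Finset.dvd_prod_of_mem _ (Finset.mem_range.2 hi)
  obtain ⟨v, hv⟩ := hdvd
  have : (∏ i ∈ Finset.range e, f.comp (C (q ^ i) * X)).eval 0 ≠ 0 := by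
    rw [eval_prod]
    refine Finset.prod_ne_zero_iff.2 fun i _ => ?_
    simpa using hf
  rw [hv, eval_mul] at this
  rw [coeff_zero_eq_eval_zero]
  exact left_ne_zero_of_mul this

lemma Nf_coeff_vanish : ∀ n, ¬ e ∣ n → Nf.coeff n = 0 := by
  have h0 := Nf_coeff_zero_ne he hq hf hNmonic hNdvd hNmin
  have hcomp := Nf_comp_eq he hq hf hNmonic hNdvd hNmin
  have hqd : q ^ Nf.natDegree = 1 := by
    have h1 := congrArg (fun p => Polynomial.coeff p 0) hcomp
    simp only [coeff_comp_C_mul_X, pow_zero, one_mul, coeff_mul_C] at h1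
    have h2 : Nf.coeff 0 * q ^ Nf.natDegree = Nf.coeff 0 * 1 := by rw [mul_one]; exact h1.symm
    exact mul_left_cancel₀ h0 h2
  intro n hn
  by_contra hc
  have h1 := congrArg (fun p => Polynomial.coeff p n) hcomp
  simp only [coeff_comp_C_mul_X, coeff_mul_C, hqd, mul_one] at h1
  have h2 : q ^ n * Nf.coeff n = 1 * Nf.coeff n := by rw [one_mul]; exact h1
  exact hn (hq.pow_eq_one_iff_dvd n |>.1 (mul_right_cancel₀ hc h2))

lemma Nf_eq_expand : Nf = expand k e (Nf.contract e) := by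
  ext n
  rw [coeff_expand he, coeff_contract he.ne']
  split_ifs with h
  · rw [Nat.div_mul_cancel h]
  · exact Nf_coeff_vanish he hq hf hNmonic hNdvd hNmin n h


lemma coeff_vanish_of_comp_eq (p : k[X]) (h : p.comp (C q * X) = p) :
    ∀ n, ¬ e ∣ n → p.coeff n = 0 := by
  intro n hn
  by_contra hc
  have h1 := coeff_comp_C_mul_X p q n
  rw [h] at h1
  have h2 : q ^ n * p.coeff n = 1 * p.coeff n := by rw [one_mul]; exact h1.symm
  exact hn (hq.pow_eq_one_iff_dvd n |>.1 (mul_right_cancel₀ hc h2))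

lemma eq_expand_contract {p : k[X]} (h : ∀ n, ¬ e ∣ n → p.coeff n = 0) :
    p = expand k e (p.contract e) := by
  ext n
  rw [coeff_expand he, coeff_contract he.ne']
  split_ifs with hd
  · rw [Nat.div_mul_cancel hd]
  · exact h n hd

lemma ker_char (l : ℕ) (s : k[X]) :
    f ∣ X ^ l * expand k e s ↔ Nf.contract e ∣ s := by
  have hNe : Nf = expand k e (Nf.contract e) := Nf_eq_expand he hq hf hNmonic hNdvd hNmin
  constructor
  · intro h
    have hX : ¬ (X : k[X]) ∣ f := by
      rw [X_dvd_iff]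
      rwa [← coeff_zero_eq_eval_zero] at hf
    have hcop : IsCoprime f ((X : k[X]) ^ l) :=
      (((Polynomial.irreducible_X (R := k)).coprime_iff_not_dvd).2 hX).symm.pow_right
    have hft : f ∣ expand k e s := hcop.dvd_of_dvd_mul_left h
    have hall : ∀ i < e, f.comp (C (q ^ i) * X) ∣ expand k e s := by
      intro i hi
      have h1 := dvd_comp_of_dvd hft (C (q ^ i) * X)
      rwa [expand_comp_C_mul_X (by rw [← pow_mul, mul_comm, pow_mul, hq.pow_eq_one, one_pow])]
        at h1
    obtain ⟨u, hu⟩ := hNmin _ hall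
    rw [hNe] at hu
    have hM0 : expand k e (Nf.contract e) ≠ 0 := hNe ▸ hNmonic.ne_zero
    have hucomp : u.comp (C q * X) = u := by
      apply mul_left_cancel₀ hM0
      have h2 : (expand k e (Nf.contract e) * u).comp (C q * X) = expand k e s := by
        rw [← hu, expand_comp_C_mul_X hq.pow_eq_one]
      rw [← hu]
      calc expand k e (Nf.contract e) * u.comp (C q * X)
          = (expand k e (Nf.contract e)).comp (C q * X) * u.comp (C q * X) := by
            rw [expand_comp_C_mul_X hq.pow_eq_one]
        _ = (expand k e (Nf.contract e) * u).comp (C q * X) := by rw [mul_comp]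
        _ = expand k e s := h2
    have hue : u = expand k e (u.contract e) :=
      eq_expand_contract he hq hf hNmonic hNdvd hNmin
        (coeff_vanish_of_comp_eq he hq hf hNmonic hNdvd hNmin u hucomp)
    refine ⟨u.contract e, (expand_injective he : Function.Injective (expand k e)) ?_⟩
    rw [map_mul, ← hue, ← hu]
  · intro h
    have h1 : f ∣ Nf := by
      have := hNdvd 0 he
      simpa using this
    have h2 : Nf ∣ expand k e s := by
      obtain ⟨t, rfl⟩ := h; exact ⟨expand k e t, by rw [map_mul, ← hNe]⟩
    exact (h1.trans h2).mul_left _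

end Main


/-- For `q` a primitive `e`-th root of unity, `f(0) ≠ 0`, `π : k[h] → k[h]/(f)`
the canonical projection and `S = k[h^e]`, the image `π(h^l·S)` has dimension
`deg N(f) / e`, where `N(f)` is the monic lcm of `f, σf, …, σ^{e-1}f` and
`σ(h) = qh`. -/
theorem dim_pi_hlS (k : Type*) [Field k] [CharZero k] (q : k) (e : ℕ)
    (he : 0 < e) (hq : IsPrimitiveRoot q e) (f : k[X]) (hf : f.eval 0 ≠ 0)
    (Nf : k[X]) (hNmonic : Nf.Monic)
    (hNdvd : ∀ i < e, f.comp (C (q ^ i) * X) ∣ Nf)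
    (hNmin : ∀ m : k[X], (∀ i < e, f.comp (C (q ^ i) * X) ∣ m) → Nf ∣ m)
    (l : ℕ) :
    Module.finrank k ↥(Submodule.span k
        ((Ideal.Quotient.mk (Ideal.span {f})) ''
          {p : k[X] | ∃ s : k[X], p = X ^ l * s.comp (X ^ e)}))
      = Nf.natDegree / e := by
  classical
  have hNe : Nf = expand k e (Nf.contract e) := Nf_eq_expand he hq hf hNmonic hNdvd hNmin
  set M := Nf.contract e with hM
  have hMmonic : M.Monic := (monic_expand_iff he).1 (hNe ▸ hNmonic)
  set I := Ideal.span {f} with hI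
  let ψ : k[X] →ₗ[k] k[X] ⧸ I :=
    (Ideal.Quotient.mkₐ k I).toLinearMap ∘ₗ
      (LinearMap.mulLeft k (X ^ l : k[X])) ∘ₗ (expand k e).toLinearMap
  have hψ : ∀ s : k[X], ψ s = Ideal.Quotient.mk I (X ^ l * s.comp (X ^ e)) := fun s => rfl
  have hset : Submodule.span k ((Ideal.Quotient.mk I) ''
      {p : k[X] | ∃ s : k[X], p = X ^ l * s.comp (X ^ e)}) = LinearMap.range ψ := by
    have hs : ((Ideal.Quotient.mk I) ''
        {p : k[X] | ∃ s : k[X], p = X ^ l * s.comp (X ^ e)}) = Set.range ψ := by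
      ext x
      simp only [Set.mem_image, Set.mem_setOf_eq, Set.mem_range]
      constructor
      · rintro ⟨p, ⟨s, rfl⟩, rfl⟩; exact ⟨s, (hψ s).symm⟩
      · rintro ⟨s, rfl⟩; exact ⟨X ^ l * s.comp (X ^ e), ⟨s, rfl⟩, (hψ s).symm⟩
    rw [hs, ← LinearMap.coe_range, Submodule.span_eq]
  rw [hset]
  have hker : LinearMap.ker ψ = (Ideal.span {M}).restrictScalars k := by
    ext s
    simp only [LinearMap.mem_ker, Submodule.restrictScalars_mem, Ideal.mem_span_singleton]
    rw [hψ s, Ideal.Quotient.eq_zero_iff_mem, hI, Ideal.mem_span_singleton]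
    exact ker_char he hq hf hNmonic hNdvd hNmin l s
  rw [← (LinearMap.quotKerEquivRange ψ).finrank_eq, hker,
    (Submodule.Quotient.restrictScalarsEquiv k (Ideal.span {M})).finrank_eq]
  have hfin : Module.finrank k (k[X] ⧸ Ideal.span {M}) = M.natDegree :=
    (AdjoinRoot.powerBasis hMmonic.ne_zero).finrank
  rw [hfin, hNe, natDegree_expand, Nat.mul_div_cancel _ he]
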